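/- Let à be a symmetric doubly stochastic N×N matrix whose eigenvalue 1 is simple with normalized eigenvector (1/√N)·1, and let r ∈ ℝ with 2r·μ < 1 for every eigenvalue μ ≠ 1 of à and 2r·1 = 1 (i.e., r = 1/2). Then lim_{t→∞} (1/log t) ∫₀^{log t} e^{−(I − 2rÃ)u} du = (1/N) J, where J is the all-ones N×N matrix. -/

import Mathlib

attribute [local instance] Matrix.frobeniusNormedAddCommGroup Matrix.frobeniusNormedSpace

open NormedSpace Matrix Filter MeasureTheory Set

lemma stmt_7_aux_scalar {c : ℝ} (hc : 0 ≤ c) :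
    Tendsto (fun T : ℝ => T⁻¹ * ∫ u in Set.Ioc (0:ℝ) T, Real.exp (-(u * c)))
      atTop (nhds (if c = 0 then 1 else 0)) := by
  rcases eq_or_lt_of_le hc with h0 | hpos
  · simp only [← h0, if_pos rfl, mul_zero, neg_zero, Real.exp_zero]
    refine Tendsto.congr' ?_ tendsto_const_nhds
    filter_upwards [eventually_gt_atTop (0:ℝ)] with T hT
    rw [MeasureTheory.setIntegral_const]
    simp [Real.volume_Ioc, hT.le, inv_mul_cancel₀ hT.ne']
  · rw [if_neg hpos.ne']
    have hint : IntegrableOn (fun u : ℝ => Real.exp (-(u * c))) (Set.Ioi 0) := by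
      simpa [mul_comm] using exp_neg_integrableOn_Ioi 0 hpos
    set M := ∫ u in Set.Ioi (0:ℝ), Real.exp (-(u * c)) with hM
    have hbound : ∀ T : ℝ, (∫ u in Set.Ioc (0:ℝ) T, Real.exp (-(u * c))) ≤ M := by
      intro T
      apply setIntegral_mono_set hint
      · filter_upwards with x using (Real.exp_pos _).le
      · exact Filter.Eventually.of_forall Ioc_subset_Ioi_self
    have hnn : ∀ T : ℝ, 0 ≤ ∫ u in Set.Ioc (0:ℝ) T, Real.exp (-(u * c)) := fun T =>
      setIntegral_nonneg measurableSet_Ioc fun x _ => (Real.exp_pos _).le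
    have hup : Tendsto (fun T : ℝ => T⁻¹ * M) atTop (nhds 0) := by
      simpa using tendsto_inv_atTop_zero.mul_const M
    refine tendsto_of_tendsto_of_tendsto_of_le_of_le' tendsto_const_nhds hup ?_ ?_
    · filter_upwards [eventually_gt_atTop (0:ℝ)] with T hT
      exact mul_nonneg (inv_nonneg.2 hT.le) (hnn T)
    · filter_upwards [eventually_gt_atTop (0:ℝ)] with T hT
      exact mul_le_mul_of_nonneg_left (hbound T) (inv_nonneg.2 hT.le)

theorem stmt_7 (N : ℕ) (hN : 0 < N) (A : Matrix (Fin N) (Fin N) ℝ)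
    (hnonneg : ∀ i j, 0 ≤ A i j)
    (hsym : A.IsSymm)
    (hrow : ∀ i, ∑ j, A i j = 1)
    (htop : ∀ v : Fin N → ℝ, A.mulVec v = v → ∃ c : ℝ, v = fun _ => c)
    (heig : ∀ (μ : ℝ) (v : Fin N → ℝ), v ≠ 0 → A.mulVec v = μ • v → μ = 1 ∨ μ < 1)
    (r : ℝ) (hr : r = 1 / 2) :
    Tendsto
      (fun t : ℝ => (Real.log t)⁻¹ •
        ∫ u in Set.Ioc (0:ℝ) (Real.log t), exp (-u • ((1 : Matrix (Fin N) (Fin N) ℝ) - (2 * r) • A)))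
      atTop
      (nhds ((N : ℝ)⁻¹ • Matrix.of (fun _ _ : Fin N => (1:ℝ)))) := by
  have hrA : (2 * r) • A = A := by rw [hr]; norm_num
  rw [show (fun t : ℝ => (Real.log t)⁻¹ •
        ∫ u in Set.Ioc (0:ℝ) (Real.log t), exp (-u • ((1 : Matrix (Fin N) (Fin N) ℝ) - (2 * r) • A)))
      = (fun t : ℝ => (Real.log t)⁻¹ •
        ∫ u in Set.Ioc (0:ℝ) (Real.log t), exp (-u • ((1 : Matrix (Fin N) (Fin N) ℝ) - A)))
      from by simp only [hrA]]
  have hA : A.IsHermitian := hsym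
  have hB : ((1 : Matrix (Fin N) (Fin N) ℝ) - A).IsHermitian := Matrix.isHermitian_one.sub hA
  set B := (1 : Matrix (Fin N) (Fin N) ℝ) - A with hBdef
  set U : Matrix (Fin N) (Fin N) ℝ := (hB.eigenvectorUnitary : Matrix (Fin N) (Fin N) ℝ) with hU
  set d : Fin N → ℝ := hB.eigenvalues with hd
  have hspec : B = U * Matrix.diagonal d * star U := by
    have := hB.spectral_theorem
    simpa using this
  have hUstar : U * star U = 1 := Matrix.mem_unitaryGroup_iff.mp hB.eigenvectorUnitary.2
  have hUstar' : star U * U = 1 := Matrix.mem_unitaryGroup_iff'.mp hB.eigenvectorUnitary.2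
  have hUinv : U⁻¹ = star U := Matrix.inv_eq_right_inv hUstar
  have hUunit : IsUnit U := ⟨⟨U, star U, hUstar, hUstar'⟩, rfl⟩
  -- eigenvector facts
  have hbasis_ne : ∀ i : Fin N, ⇑(hB.eigenvectorBasis i) ≠ 0 := by
    intro i h0
    refine hB.eigenvectorBasis.orthonormal.ne_zero i ?_
    refine (WithLp.equiv 2 _).injective ?_
    simpa using h0
  have hAv : ∀ i : Fin N, A *ᵥ ⇑(hB.eigenvectorBasis i) = (1 - d i) • ⇑(hB.eigenvectorBasis i) := by
    intro i
    have hv := hB.mulVec_eigenvectorBasis i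
    have : (1 - A) *ᵥ ⇑(hB.eigenvectorBasis i) = d i • ⇑(hB.eigenvectorBasis i) := hv
    rw [Matrix.sub_mulVec, Matrix.one_mulVec] at this
    rw [sub_smul, one_smul, eq_sub_iff_add_eq, add_comm]
    exact (sub_eq_iff_eq_add.mp this).symm
  have hdnn : ∀ i : Fin N, 0 ≤ d i := by
    intro i
    rcases heig (1 - d i) _ (hbasis_ne i) (hAv i) with h | h
    · nlinarith
    · linarith
  -- existence of zero eigenvalue
  have hones : A *ᵥ (fun _ => (1:ℝ)) = fun _ => (1:ℝ) := by
    funext i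
    simp [Matrix.mulVec, dotProduct, hrow i]
  have hBones : B *ᵥ (fun _ => (1:ℝ)) = 0 := by
    rw [hBdef, Matrix.sub_mulVec, Matrix.one_mulVec, hones]
    simp
  obtain ⟨i₀, hdi₀⟩ : ∃ i₀, d i₀ = 0 := by
    set w : Fin N → ℝ := star U *ᵥ (fun _ => (1:ℝ)) with hw
    have hUw : U *ᵥ w = fun _ => (1:ℝ) := by
      rw [hw, Matrix.mulVec_mulVec, hUstar, Matrix.one_mulVec]
    have hdw : Matrix.diagonal d *ᵥ w = 0 := by
      have h1 : star U * B * U = Matrix.diagonal d := by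
        have := hB.conjStarAlgAut_star_eigenvectorUnitary
        simpa using this
      rw [← h1]
      rw [← Matrix.mulVec_mulVec, ← Matrix.mulVec_mulVec, hUw, hBones, Matrix.mulVec_zero]
    have hwne : w ≠ 0 := by
      intro h0
      rw [h0, Matrix.mulVec_zero] at hUw
      have := congrFun hUw ⟨0, hN⟩
      simp at this
    obtain ⟨i, hi⟩ := Function.ne_iff.mp hwne
    refine ⟨i, ?_⟩
    have := congrFun hdw i
    simp [Matrix.mulVec_diagonal] at this
    rcases this with h | h
    · exact h
    · exact absurd h hi
  -- each zero-eigenvalue eigenvector is constant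
  have hconst : ∀ i : Fin N, d i = 0 → ∃ c : ℝ, c ≠ 0 ∧ ⇑(hB.eigenvectorBasis i) = fun _ => c := by
    intro i hi
    have h1 : A *ᵥ ⇑(hB.eigenvectorBasis i) = ⇑(hB.eigenvectorBasis i) := by
      have := hAv i; rw [hi] at this; simpa using this
    obtain ⟨c, hc⟩ := htop _ h1
    refine ⟨c, ?_, hc⟩
    intro hc0
    apply hbasis_ne i
    rw [hc, hc0]
    rfl
  -- uniqueness
  have huniq : ∀ i : Fin N, d i = 0 → i = i₀ := by
    intro i hi
    by_contra hne
    obtain ⟨c, hc0, hc⟩ := hconst i hi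
    obtain ⟨c', hc0', hc'⟩ := hconst i₀ hdi₀
    have horth : (inner ℝ (hB.eigenvectorBasis i) (hB.eigenvectorBasis i₀) : ℝ) = 0 :=
      hB.eigenvectorBasis.orthonormal.2 hne
    rw [PiLp.inner_apply] at horth
    have : ∀ j : Fin N, (hB.eigenvectorBasis i) j = c := fun j => congrFun hc j
    have h2 : ∀ j : Fin N, (hB.eigenvectorBasis i₀) j = c' := fun j => congrFun hc' j
    simp only [this, h2, RCLike.inner_apply, starRingEnd_apply, star_trivial] at horth
    rw [Finset.sum_const, Finset.card_univ, Fintype.card_fin, nsmul_eq_mul] at horth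
    have hNne : (N:ℝ) ≠ 0 := Nat.cast_ne_zero.mpr hN.ne'
    rcases mul_eq_zero.mp horth with h | h
    · exact hNne h
    · rcases mul_eq_zero.mp h with h' | h'
      · exact hc0' h'
      · exact hc0 h'
  -- the constant c for i₀ and its square
  obtain ⟨c, hc0, hc⟩ := hconst i₀ hdi₀
  have hcsq : c * c = (N:ℝ)⁻¹ := by
    have hnorm := hB.eigenvectorBasis.orthonormal.1 i₀
    rw [EuclideanSpace.norm_eq] at hnorm
    have h1 : ∀ j : Fin N, (hB.eigenvectorBasis i₀) j = c := fun j => congrFun hc j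
    simp only [h1, Real.norm_eq_abs, sq_abs] at hnorm
    rw [Finset.sum_const, Finset.card_univ, Fintype.card_fin, nsmul_eq_mul] at hnorm
    have hNne : (N:ℝ) ≠ 0 := Nat.cast_ne_zero.mpr hN.ne'
    have h2 : (N:ℝ) * c ^ 2 = 1 := Real.sqrt_eq_one.mp hnorm
    field_simp
    nlinarith [h2]
  -- exp formula
  have hexp : ∀ u : ℝ, exp (-u • B) =
      U * Matrix.diagonal (fun i => Real.exp (-(u * d i))) * star U := by
    intro u
    have h1 : -u • B = U * Matrix.diagonal (fun i => -(u * d i)) * U⁻¹ := by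
      rw [hUinv, hspec, ← smul_mul_assoc, ← mul_smul_comm, ← Matrix.diagonal_smul]
      congr 2
      funext i j
      simp [Matrix.diagonal_apply]
    rw [h1, Matrix.exp_conj U _ hUunit, Matrix.exp_diagonal, hUinv]
    congr 2
    rw [Pi.exp_def]
    funext i
    rw [← Real.exp_eq_exp_ℝ]
  -- the continuous linear map
  let Llin : (Fin N → ℝ) →ₗ[ℝ] Matrix (Fin N) (Fin N) ℝ :=
    { toFun := fun v => U * Matrix.diagonal v * star U
      map_add' := fun x y => by
        show U * Matrix.diagonal (x + y) * star U
          = U * Matrix.diagonal x * star U + U * Matrix.diagonal y * star U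
        rw [show Matrix.diagonal (x + y) = Matrix.diagonal x + Matrix.diagonal y from
          by rw [Matrix.diagonal_add]; rfl, mul_add, add_mul]
      map_smul' := fun m x => by
        show U * Matrix.diagonal (m • x) * star U = m • (U * Matrix.diagonal x * star U)
        rw [Matrix.diagonal_smul, mul_smul_comm, smul_mul_assoc] }
  let L : (Fin N → ℝ) →L[ℝ] Matrix (Fin N) (Fin N) ℝ := Llin.toContinuousLinearMap
  have hLapp : ∀ v, L v = U * Matrix.diagonal v * star U := fun v => rfl
  -- integral identity
  have hgcont : Continuous (fun u : ℝ => (fun i => Real.exp (-(u * d i)) : Fin N → ℝ)) := by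
    apply continuous_pi
    intro i
    exact Real.continuous_exp.comp ((continuous_id.mul continuous_const).neg)
  have hgint : ∀ T : ℝ, IntegrableOn
      (fun u : ℝ => (fun i => Real.exp (-(u * d i)) : Fin N → ℝ)) (Set.Ioc 0 T) := fun T =>
    hgcont.integrableOn_Ioc
  have hint_eq : ∀ T : ℝ, (∫ u in Set.Ioc (0:ℝ) T, exp (-u • B))
      = L (fun i => ∫ u in Set.Ioc (0:ℝ) T, Real.exp (-(u * d i))) := by
    intro T
    have h1 : (∫ u in Set.Ioc (0:ℝ) T, exp (-u • B))
        = ∫ u in Set.Ioc (0:ℝ) T, L (fun i => Real.exp (-(u * d i))) := by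
      congr 1
      funext u
      rw [hexp u, hLapp]
    rw [h1]; refine (ContinuousLinearMap.integral_comp_comm L (hgint T)).trans ?_
    congr 1
    funext i
    exact
      (ContinuousLinearMap.integral_comp_comm (ContinuousLinearMap.proj (R := ℝ)
        (φ := fun _ : Fin N => ℝ) i) (hgint T)).symm
  -- main convergence
  set δ : Fin N → ℝ := fun i => if d i = 0 then 1 else 0 with hδ
  have hF : Tendsto (fun T : ℝ => (fun i => T⁻¹ * ∫ u in Set.Ioc (0:ℝ) T, Real.exp (-(u * d i))
      : Fin N → ℝ)) atTop (nhds δ) := by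
    rw [tendsto_pi_nhds]
    intro i
    exact stmt_7_aux_scalar (hdnn i)
  have hG : Tendsto (fun T : ℝ => T⁻¹ • ∫ u in Set.Ioc (0:ℝ) T, exp (-u • B))
      atTop (nhds (L δ)) := by
    have := (L.continuous.tendsto δ).comp hF
    refine Tendsto.congr ?_ this
    intro T
    rw [hint_eq, ← L.map_smul]
    exact congrArg L (funext fun i => rfl)
  -- identify the limit
  have hLδ : L δ = (N : ℝ)⁻¹ • Matrix.of (fun _ _ : Fin N => (1:ℝ)) := by
    rw [hLapp]
    ext j k
    rw [Matrix.mul_apply]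
    have hδ' : δ = fun i => if i = i₀ then 1 else 0 := by
      funext i
      by_cases h : d i = 0
      · simp [hδ, h, huniq i h, hdi₀]
      · have : i ≠ i₀ := fun he => h (he ▸ hdi₀)
        simp [hδ, h, this]
    have hUc : ∀ j : Fin N, U j i₀ = c := by
      intro j
      rw [hU, Matrix.IsHermitian.eigenvectorUnitary_apply]
      exact congrFun hc j
    rw [hδ']
    have : ∀ x : Fin N, (U * Matrix.diagonal fun i => if i = i₀ then (1:ℝ) else 0) j x
        * star U x k = if x = i₀ then U j i₀ * U k i₀ else 0 := by
      intro x
      rw [Matrix.mul_diagonal, Matrix.star_apply, star_trivial]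
      by_cases h : x = i₀ <;> simp [h]
    rw [Finset.sum_congr rfl fun x _ => this x, Finset.sum_ite_eq' Finset.univ i₀]
    simp [hUc, hcsq]
  rw [← hLδ]
  exact hG.comp Real.tendsto_log_atTop
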